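/- arXiv:2505.02023 — 2 statements merged into one kernel-verified Lean document; each statement's English description precedes it below -/
import Mathlib

section
/- Let B ∈ ℂ^{n×n} be Hermitian (n ≥ 2). For each unordered pair {i,j} of distinct indices, let U_{ij} be a unitary matrix agreeing with the identity outside the {i,j}×{i,j} block such that (U_{ij}* B U_{ij})_{ij} = 0. If the pair {i,j} is sampled uniformly at random among all n(n−1)/2 unordered pairs, then E[off(U_{ij}* B U_{ij})] = (1 − 2/(n(n−1))) · off(B). -/
open Matrix
open scoped ComplexOrder

noncomputable section


/-- `off(M) = Σ_{i ≠ j} |m_{ij}|²`, the squared Frobenius distance to the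
nearest diagonal matrix. -/
def off {n : ℕ} (M : Matrix (Fin n) (Fin n) ℂ) : ℝ :=
  ∑ p ∈ (Finset.univ : Finset (Fin n)).offDiag, ‖M p.1 p.2‖ ^ 2

def frob {m : Type*} [Fintype m] (M : Matrix m m ℂ) : ℝ :=
  ∑ k, ∑ l, ‖M k l‖ ^ 2

lemma frob_eq_trace {m : Type*} [Fintype m] (M : Matrix m m ℂ) :
    ((frob M : ℝ) : ℂ) = Matrix.trace (Mᴴ * M) := by
  simp only [frob, Matrix.trace, Matrix.diag, Matrix.mul_apply, Matrix.conjTranspose_apply]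
  push_cast
  rw [Finset.sum_comm]
  congr 1; ext l; congr 1; ext k
  rw [Complex.star_def, Complex.conj_mul']

lemma frob_conj {m : Type*} [Fintype m] [DecidableEq m] (W M : Matrix m m ℂ)
    (hW : Wᴴ * W = 1) : frob (Wᴴ * M * W) = frob M := by
  have hW' : W * Wᴴ = 1 := mul_eq_one_comm.mp hW
  have h : ((frob (Wᴴ * M * W) : ℝ) : ℂ) = ((frob M : ℝ) : ℂ) := by
    rw [frob_eq_trace, frob_eq_trace]
    have h1 : (Wᴴ * M * W)ᴴ * (Wᴴ * M * W) = Wᴴ * (Mᴴ * M) * W := by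
      simp only [Matrix.conjTranspose_mul, Matrix.conjTranspose_conjTranspose,
        Matrix.mul_assoc]
      rw [show W * (Wᴴ * (M * W)) = M * W by
        rw [← Matrix.mul_assoc, hW', Matrix.one_mul]]
    rw [h1, Matrix.trace_mul_cycle, ← Matrix.mul_assoc, hW', Matrix.one_mul]
  exact_mod_cast h

lemma off_eq_frob {n : ℕ} (M : Matrix (Fin n) (Fin n) ℂ) :
    off M = frob M - ∑ k, ‖M k k‖ ^ 2 := by
  have h : frob M = (∑ k, ‖M k k‖ ^ 2) + off M := by
    rw [frob, ← Finset.sum_product']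
    rw [show (Finset.univ ×ˢ Finset.univ : Finset (Fin n × Fin n)) =
        (Finset.univ : Finset (Fin n)).diag ∪ (Finset.univ : Finset (Fin n)).offDiag from
        (Finset.diag_union_offDiag _).symm]
    rw [Finset.sum_union (Finset.disjoint_diag_offDiag _), Finset.sum_diag]
    rfl
  rw [h]; ring

lemma off_update {n : ℕ} (i j : Fin n) (hij : i ≠ j)
    (B W : Matrix (Fin n) (Fin n) ℂ) (hB : B.IsHermitian) (hW : Wᴴ * W = 1)
    (hid : ∀ a b, ¬(a ∈ ({i, j} : Finset (Fin n)) ∧ b ∈ ({i, j} : Finset (Fin n))) →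
      W a b = if a = b then (1 : ℂ) else 0)
    (hz : (Wᴴ * B * W) i j = 0) :
    off (Wᴴ * B * W) = off B - ‖B i j‖ ^ 2 - ‖B j i‖ ^ 2 := by
  set A := Wᴴ * B * W with hA
  -- A is Hermitian
  have hAH : A.IsHermitian := by
    rw [Matrix.IsHermitian, hA]
    simp only [Matrix.conjTranspose_mul, Matrix.conjTranspose_conjTranspose, hB.eq,
      Matrix.mul_assoc]
  have hAji : A j i = 0 := by
    have := hAH.eq
    have h2 : A j i = star (A i j) := by
      conv_lhs => rw [← this]
      rfl
    rw [h2, hz, star_zero]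
  -- W columns/rows outside block
  have hcol : ∀ (k : Fin n), k ≠ i → k ≠ j → ∀ p, W p k = if p = k then 1 else 0 := by
    intro k hki hkj p
    exact hid p k (by simp [hki, hkj])
  have hcolS : ∀ (k : Fin n), (k = i ∨ k = j) → ∀ p, p ≠ i → p ≠ j → W p k = 0 := by
    intro k hk p hpi hpj
    have := hid p k (by simp [hpi, hpj])
    rw [this, if_neg]
    rintro rfl
    rcases hk with rfl | rfl
    · exact hpi rfl
    · exact hpj rfl
  -- diagonal entries outside {i,j} unchanged
  have hdiag : ∀ k, k ≠ i → k ≠ j → A k k = B k k := by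
    intro k hki hkj
    have h := hcol k hki hkj
    rw [hA, Matrix.mul_apply]
    simp only [Matrix.mul_apply, Matrix.conjTranspose_apply, h]
    simp [Finset.sum_ite_eq', mul_ite, ite_mul, apply_ite]
  -- block sum preservation
  have e0 : (![i, j] : Fin 2 → Fin n) 0 = i := rfl
  have e1 : (![i, j] : Fin 2 → Fin n) 1 = j := rfl
  set e : Fin 2 → Fin n := ![i, j] with he
  have heS : ∀ x : Fin 2, e x = i ∨ e x = j := by
    intro x; fin_cases x <;> simp [he]
  set V : Matrix (Fin 2) (Fin 2) ℂ := fun x y => W (e x) (e y) with hV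
  set B' : Matrix (Fin 2) (Fin 2) ℂ := fun x y => B (e x) (e y) with hB'
  set A' : Matrix (Fin 2) (Fin 2) ℂ := fun x y => A (e x) (e y) with hA'
  -- restriction of a sum over Fin n with support in {i,j}
  have hsum2 : ∀ f : Fin n → ℂ, (∀ p, p ≠ i → p ≠ j → f p = 0) →
      ∑ p, f p = ∑ x : Fin 2, f (e x) := by
    intro f hf
    rw [Fin.sum_univ_two, e0, e1]
    rw [← Finset.sum_pair hij]
    symm
    apply Finset.sum_subset (Finset.subset_univ _)
    intro p _ hp
    simp only [Finset.mem_insert, Finset.mem_singleton, not_or] at hp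
    exact hf p hp.1 hp.2
  have hVU : Vᴴ * V = 1 := by
    ext x y
    have : (Vᴴ * V) x y = ∑ p, star (W p (e x)) * W p (e y) := by
      rw [Matrix.mul_apply]
      simp only [Matrix.conjTranspose_apply, hV]
      rw [hsum2 (fun p => star (W p (e x)) * W p (e y))
        (by intro p hpi hpj
            simp only [hcolS (e x) (heS x) p hpi hpj, star_zero, zero_mul])]
      rfl
    rw [this]
    have h1 : (Wᴴ * W) (e x) (e y) = ∑ p, star (W p (e x)) * W p (e y) := by
      rw [Matrix.mul_apply]; simp [Matrix.conjTranspose_apply]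
    rw [← h1, hW]
    have hinj : e x = e y → x = y := by
      intro h
      fin_cases x <;> fin_cases y <;>
        first
          | rfl
          | (exact absurd h hij)
          | (exact absurd h.symm hij)
    by_cases hxy : x = y
    · subst hxy; simp [Matrix.one_apply]
    · rw [Matrix.one_apply_ne (fun h => hxy (hinj h)), Matrix.one_apply_ne hxy]
  have hA'eq : A' = Vᴴ * B' * V := by
    ext x y
    rw [hA', hA]
    rw [Matrix.mul_apply]
    simp only [Matrix.mul_apply, Matrix.conjTranspose_apply]
    -- A (e x) (e y) = ∑ q, (∑ p, star (W p (e x)) * B p q) * W q (e y)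
    rw [hsum2 (fun q => (∑ p, star (W (p) (e x)) * B p q) * W q (e y))
      (by intro q hqi hqj
          simp only [hcolS (e y) (heS y) q hqi hqj, mul_zero])]
    congr 1; ext w
    congr 1
    rw [hsum2 (fun p => star (W p (e x)) * B p (e w))
      (by intro p hpi hpj
          simp only [hcolS (e x) (heS x) p hpi hpj, star_zero, zero_mul])]
  have hfrobblock : frob A' = frob B' := by
    rw [hA'eq]; exact frob_conj V B' hVU
  have hblock : ‖A i i‖ ^ 2 + ‖A j j‖ ^ 2
      = ‖B i i‖ ^ 2 + ‖B i j‖ ^ 2 + ‖B j i‖ ^ 2 + ‖B j j‖ ^ 2 := by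
    have h1 : frob A' = ‖A i i‖^2 + ‖A i j‖^2 + ‖A j i‖^2 + ‖A j j‖^2 := by
      simp [frob, Fin.sum_univ_two, hA', he]; ring
    have h2 : frob B' = ‖B i i‖^2 + ‖B i j‖^2 + ‖B j i‖^2 + ‖B j j‖^2 := by
      simp [frob, Fin.sum_univ_two, hB', he]; ring
    have hAij : A i j = 0 := hz
    rw [h1, h2, hAij, hAji] at hfrobblock
    simp only [norm_zero] at hfrobblock
    nlinarith [hfrobblock]
  -- full frobenius preservation
  have hfrob : frob A = frob B := frob_conj W B hW
  -- split the diagonal sums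
  have hsplitA : ∑ k, ‖A k k‖ ^ 2
      = (∑ k ∈ Finset.univ \ ({i, j} : Finset (Fin n)), ‖A k k‖ ^ 2)
        + (‖A i i‖ ^ 2 + ‖A j j‖ ^ 2) := by
    rw [← Finset.sum_pair hij (f := fun k => ‖A k k‖^2),
      Finset.sum_sdiff (Finset.subset_univ _)]
  have hsplitB : ∑ k, ‖B k k‖ ^ 2
      = (∑ k ∈ Finset.univ \ ({i, j} : Finset (Fin n)), ‖B k k‖ ^ 2)
        + (‖B i i‖ ^ 2 + ‖B j j‖ ^ 2) := by
    rw [← Finset.sum_pair hij (f := fun k => ‖B k k‖^2),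
      Finset.sum_sdiff (Finset.subset_univ _)]
  have houtside : ∑ k ∈ Finset.univ \ ({i, j} : Finset (Fin n)), ‖A k k‖ ^ 2
      = ∑ k ∈ Finset.univ \ ({i, j} : Finset (Fin n)), ‖B k k‖ ^ 2 := by
    apply Finset.sum_congr rfl
    intro k hk
    simp only [Finset.mem_sdiff, Finset.mem_insert, Finset.mem_singleton, not_or] at hk
    rw [hdiag k hk.2.1 hk.2.2]
  rw [off_eq_frob, off_eq_frob, hfrob, hsplitA, hsplitB, houtside, hblock]
  ring

/-- averaging over a uniformly random unordered pair `{i,j}` of distinct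
indices, one Givens-type rotation zeroing the `(i,j)` entry gives
`E[off(U_{ij}* B U_{ij})] = (1 − 2/(n(n−1)))·off(B)`. -/
theorem expected_off_jacobi_update {n : ℕ} (hn : 2 ≤ n)
    (B : Matrix (Fin n) (Fin n) ℂ) (hB : B.IsHermitian)
    (U : Fin n → Fin n → Matrix (Fin n) (Fin n) ℂ)
    (hsym : ∀ i j, U i j = U j i)
    (hunit : ∀ i j, i ≠ j → (U i j)ᴴ * (U i j) = 1)
    (hUid : ∀ i j, i ≠ j → ∀ a b,
      ¬(a ∈ ({i, j} : Finset (Fin n)) ∧ b ∈ ({i, j} : Finset (Fin n))) →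
      U i j a b = if a = b then (1 : ℂ) else 0)
    (hzero : ∀ i j, i ≠ j → ((U i j)ᴴ * B * (U i j)) i j = 0) :
    (∑ p ∈ (Finset.univ : Finset (Fin n)).offDiag, off ((U p.1 p.2)ᴴ * B * (U p.1 p.2))) /
        ((n : ℝ) * ((n : ℝ) - 1)) =
      (1 - 2 / ((n : ℝ) * ((n : ℝ) - 1))) * off B := by
  have key : ∀ p ∈ (Finset.univ : Finset (Fin n)).offDiag,
      off ((U p.1 p.2)ᴴ * B * (U p.1 p.2)) = off B - 2 * ‖B p.1 p.2‖ ^ 2 := by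
    intro p hp
    have hne : p.1 ≠ p.2 := (Finset.mem_offDiag.mp hp).2.2
    have h := off_update p.1 p.2 hne B (U p.1 p.2) hB (hunit _ _ hne)
      (hUid _ _ hne) (hzero _ _ hne)
    have hnorm : ‖B p.2 p.1‖ = ‖B p.1 p.2‖ := by
      have h2 : B p.2 p.1 = star (B p.1 p.2) := (hB.apply _ _).symm
      rw [h2, norm_star]
    rw [h, hnorm]; ring
  rw [Finset.sum_congr rfl key, Finset.sum_sub_distrib, Finset.sum_const,
    ← Finset.mul_sum]
  have hoff : ∑ p ∈ (Finset.univ : Finset (Fin n)).offDiag, ‖B p.1 p.2‖ ^ 2 = off B := rfl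
  rw [hoff]
  have hcard : ((Finset.univ : Finset (Fin n)).offDiag).card = n * n - n := by
    simp [Finset.offDiag_card]
  rw [hcard, nsmul_eq_mul]
  have hc : ((n * n - n : ℕ) : ℝ) = (n : ℝ) * (n : ℝ) - (n : ℝ) := by
    have : n ≤ n * n := Nat.le_mul_of_pos_left n (by omega)
    push_cast [Nat.cast_sub this]
    ring
  rw [hc]
  have hne0 : (n : ℝ) * ((n : ℝ) - 1) ≠ 0 := by
    have h1 : (2 : ℝ) ≤ (n : ℝ) := by exact_mod_cast hn
    have : (n : ℝ) > 0 := by linarith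
    have : (n : ℝ) - 1 > 0 := by linarith
    positivity
  have hn1 : (n : ℝ) - 1 ≠ 0 := by
    have : (2 : ℝ) ≤ (n : ℝ) := by exact_mod_cast hn
    linarith
  have hn0 : (n : ℝ) ≠ 0 := by
    have : (2 : ℝ) ≤ (n : ℝ) := by exact_mod_cast hn
    linarith
  field_simp
end
end

section
/- Consider the finite-arithmetic generalized two-sided factorization process with randomized size-k pivoting: J_0, J_1, … are independent uniformly random size-k subsets of [n]; B̃^{(t)}, B̃^{(t+1/3)}, B̃^{(t+2/3)} are Hermitian positive definite matrices with positive diagonals, adapted to the pivot history, such that B̃^{(t+2/3)} is obtained from B̃^{(t+1/3)} by one exact pivot step with pivot set J_t (conjugation by a transformation diagonalizing the J_t×J_t block). Define X_t = Γ(B̃^{(t+2/3)})/Γ(B̃^{(t+1/3)}) and Y_{t₁,t₂} = Π_{t=t₁}^{t₂} X_t (with Y_{t₁,t₂}=1 if t₂<t₁), and C = 1 − k(k−1)/(n(n−1)). Then for every index t₁, the process { C^{t₁−1−t} Y_{t₁,t} }_{t≥t₁} is a nonnegative martingale with respect to the filtration generated by the pivots. -/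
open Matrix
open scoped ComplexOrder

noncomputable section

/-- `D_B^{1/2}`: the diagonal matrix whose entries are the square roots of the
diagonal entries of `B`. -/
def sqrtDiag {n : ℕ} (B : Matrix (Fin n) (Fin n) ℂ) : Matrix (Fin n) (Fin n) ℂ :=
  Matrix.diagonal fun i => (Real.sqrt (B i i).re : ℂ)

/-- The diagonal normalization `B̂ = D_B^{-1/2} B D_B^{-1/2}`. -/
def hatM {n : ℕ} (B : Matrix (Fin n) (Fin n) ℂ) : Matrix (Fin n) (Fin n) ℂ :=
  (sqrtDiag B)⁻¹ * B * (sqrtDiag B)⁻¹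

/-- The potential function `Γ(B) = tr(B̂⁻¹) − n` (a real number for Hermitian
positive definite `B`). -/
def Gamma {n : ℕ} (B : Matrix (Fin n) (Fin n) ℂ) : ℝ :=
  (Matrix.trace ((hatM B)⁻¹)).re - n

/-- The set of pivot sets: size-`k` subsets of `[n]`. -/
abbrev PivotSet (n k : ℕ) := {J : Finset (Fin n) // J.card = k}

/-- `B_{JJ}`: the `k × k` principal submatrix of `B` on the rows and columns indexed by `J`
(listed in increasing order). -/
def subJ {n k : ℕ} (J : Finset (Fin n)) (hJ : J.card = k) (B : Matrix (Fin n) (Fin n) ℂ) :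
    Matrix (Fin k) (Fin k) ℂ :=
  B.submatrix (fun a => ((J.orderIsoOfFin hJ) a).val) (fun a => ((J.orderIsoOfFin hJ) a).val)

/-- The `n × n` matrix which is `S` on the `J × J` block (after the order-preserving
identification of `J` with `{1, …, k}`) and agrees with the identity elsewhere; this is
`P_σ* [[S, 0], [0, I]] P_σ` for the order-preserving permutation `σ` with `σ(J) = [k]`. -/
def embedJ {n k : ℕ} (J : Finset (Fin n)) (hJ : J.card = k) (S : Matrix (Fin k) (Fin k) ℂ) :
    Matrix (Fin n) (Fin n) ℂ :=
  Matrix.of fun a b =>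
    if ha : a ∈ J then
      if hb : b ∈ J then
        S ((J.orderIsoOfFin hJ).symm ⟨a, ha⟩) ((J.orderIsoOfFin hJ).symm ⟨b, hb⟩)
      else 0
    else if a = b then 1 else 0

section EmbedLemmas
variable {n k : ℕ} (J : Finset (Fin n)) (hJ : J.card = k)

lemma mem_iota (x : Fin k) : ((J.orderIsoOfFin hJ) x : Fin n) ∈ J := (J.orderIsoOfFin hJ x).2

lemma sum_eq_sum_iota (f : Fin n → ℂ) (hf : ∀ c ∉ J, f c = 0) :
    ∑ c, f c = ∑ x : Fin k, f ((J.orderIsoOfFin hJ) x : Fin n) := by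
  rw [← Finset.sum_subset (Finset.subset_univ J) (fun c _ hc => hf c hc)]
  rw [← Finset.sum_coe_sort J f]
  exact (Equiv.sum_comp (J.orderIsoOfFin hJ).toEquiv (fun c : J => f c)).symm

variable {S T : Matrix (Fin k) (Fin k) ℂ}

lemma embedJ_apply_mem {a b : Fin n} (ha : a ∈ J) (hb : b ∈ J) (S : Matrix (Fin k) (Fin k) ℂ) :
    embedJ J hJ S a b = S ((J.orderIsoOfFin hJ).symm ⟨a, ha⟩) ((J.orderIsoOfFin hJ).symm ⟨b, hb⟩) := by
  simp [embedJ, ha, hb]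

lemma embedJ_apply_mem_not {a b : Fin n} (ha : a ∈ J) (hb : b ∉ J) (S : Matrix (Fin k) (Fin k) ℂ) :
    embedJ J hJ S a b = 0 := by simp [embedJ, ha, hb]

lemma embedJ_apply_not {a : Fin n} (ha : a ∉ J) (b : Fin n) (S : Matrix (Fin k) (Fin k) ℂ) :
    embedJ J hJ S a b = if a = b then 1 else 0 := by simp [embedJ, ha]

lemma symm_mk_iota (x : Fin k) (h : ((J.orderIsoOfFin hJ) x : Fin n) ∈ J) :
    (J.orderIsoOfFin hJ).symm ⟨(J.orderIsoOfFin hJ) x, h⟩ = x := by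
  have h2 : (⟨((J.orderIsoOfFin hJ) x : Fin n), h⟩ : {a // a ∈ J}) = (J.orderIsoOfFin hJ) x :=
    Subtype.ext rfl
  rw [h2, OrderIso.symm_apply_apply]

lemma embedJ_apply_iota (x y : Fin k) (S : Matrix (Fin k) (Fin k) ℂ) :
    embedJ J hJ S ((J.orderIsoOfFin hJ) x : Fin n) ((J.orderIsoOfFin hJ) y : Fin n) = S x y := by
  rw [embedJ_apply_mem J hJ (mem_iota J hJ x) (mem_iota J hJ y)]
  congr 1 <;> apply symm_mk_iota

lemma embedJ_one : embedJ J hJ (1 : Matrix (Fin k) (Fin k) ℂ) = 1 := by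
  ext a b
  by_cases ha : a ∈ J
  · by_cases hb : b ∈ J
    · rw [embedJ_apply_mem J hJ ha hb]
      rcases eq_or_ne a b with rfl | hab
      · simp [Matrix.one_apply]
      · have : ((J.orderIsoOfFin hJ).symm ⟨a, ha⟩) ≠ ((J.orderIsoOfFin hJ).symm ⟨b, hb⟩) := by
          simp [Subtype.ext_iff, hab]
        simp [Matrix.one_apply, this, hab]
    · rw [embedJ_apply_mem_not J hJ ha hb]
      have : a ≠ b := fun h => hb (h ▸ ha)
      simp [Matrix.one_apply, this]
  · rw [embedJ_apply_not J hJ ha]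
    simp [Matrix.one_apply]

lemma embedJ_conjTranspose (S : Matrix (Fin k) (Fin k) ℂ) :
    (embedJ J hJ S)ᴴ = embedJ J hJ Sᴴ := by
  ext a b
  by_cases ha : a ∈ J
  · by_cases hb : b ∈ J
    · rw [Matrix.conjTranspose_apply, embedJ_apply_mem J hJ hb ha, embedJ_apply_mem J hJ ha hb]
      simp [Matrix.conjTranspose_apply]
    · rw [Matrix.conjTranspose_apply, embedJ_apply_not J hJ hb, embedJ_apply_mem_not J hJ ha hb]
      have : b ≠ a := fun h => hb (h ▸ ha)
      simp [this]
  · rw [Matrix.conjTranspose_apply, embedJ_apply_not J hJ ha]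
    by_cases hb : b ∈ J
    · rw [embedJ_apply_mem_not J hJ hb ha]
      have : a ≠ b := fun h => ha (h ▸ hb)
      simp [this]
    · rw [embedJ_apply_not J hJ hb]
      rcases eq_or_ne a b with rfl | hab
      · simp
      · simp [hab, Ne.symm hab]

lemma embedJ_mul (S T : Matrix (Fin k) (Fin k) ℂ) :
    embedJ J hJ S * embedJ J hJ T = embedJ J hJ (S * T) := by
  ext a b
  rw [Matrix.mul_apply]
  by_cases ha : a ∈ J
  · by_cases hb : b ∈ J
    · rw [embedJ_apply_mem J hJ ha hb, Matrix.mul_apply]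
      rw [sum_eq_sum_iota J hJ _ (fun c hc => by
        rw [embedJ_apply_mem_not J hJ ha hc, zero_mul])]
      refine Finset.sum_congr rfl fun x _ => ?_
      rw [embedJ_apply_mem J hJ ha (mem_iota J hJ x), embedJ_apply_mem J hJ (mem_iota J hJ x) hb]
      rw [symm_mk_iota]
    · rw [embedJ_apply_mem_not J hJ ha hb]
      apply Finset.sum_eq_zero
      intro c _
      by_cases hc : c ∈ J
      · rw [embedJ_apply_mem_not J hJ hc hb, mul_zero]
      · rw [embedJ_apply_mem_not J hJ ha hc, zero_mul]
  · rw [embedJ_apply_not J hJ ha b]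
    have h1 : ∀ c, embedJ J hJ S a c = if a = c then 1 else 0 := fun c => embedJ_apply_not J hJ ha c S
    calc ∑ c, embedJ J hJ S a c * embedJ J hJ T c b
        = ∑ c, (if a = c then embedJ J hJ T c b else 0) := by
          refine Finset.sum_congr rfl fun c _ => ?_
          rw [h1 c]; split <;> simp
      _ = embedJ J hJ T a b := by simp
      _ = if a = b then 1 else 0 := embedJ_apply_not J hJ ha b T

end EmbedLemmas

section SubLemmas
variable {n k : ℕ} (J : Finset (Fin n)) (hJ : J.card = k)

lemma subJ_apply (B : Matrix (Fin n) (Fin n) ℂ) (x y : Fin k) :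
    subJ J hJ B x y = B ((J.orderIsoOfFin hJ) x : Fin n) ((J.orderIsoOfFin hJ) y : Fin n) := rfl

lemma subJ_mul_embedJ (A : Matrix (Fin n) (Fin n) ℂ) (S : Matrix (Fin k) (Fin k) ℂ) :
    subJ J hJ (A * embedJ J hJ S) = subJ J hJ A * S := by
  ext x y
  rw [subJ_apply, Matrix.mul_apply, Matrix.mul_apply]
  have hv : ∀ c ∉ J, A ((J.orderIsoOfFin hJ) x : Fin n) c
      * embedJ J hJ S c ((J.orderIsoOfFin hJ) y : Fin n) = 0 := by
    intro c hc
    rw [embedJ_apply_not J hJ hc, if_neg (fun h : c = _ => hc (h ▸ mem_iota J hJ y)), mul_zero]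
  rw [sum_eq_sum_iota J hJ _ hv]
  refine Finset.sum_congr rfl fun z _ => ?_
  rw [embedJ_apply_iota, subJ_apply]

lemma embedJ_mul_subJ (A : Matrix (Fin n) (Fin n) ℂ) (S : Matrix (Fin k) (Fin k) ℂ) :
    subJ J hJ (embedJ J hJ S * A) = S * subJ J hJ A := by
  ext x y
  rw [subJ_apply, Matrix.mul_apply, Matrix.mul_apply]
  have hv : ∀ c ∉ J, embedJ J hJ S ((J.orderIsoOfFin hJ) x : Fin n) c
      * A c ((J.orderIsoOfFin hJ) y : Fin n) = 0 := by
    intro c hc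
    rw [embedJ_apply_mem_not J hJ (mem_iota J hJ x) hc, zero_mul]
  rw [sum_eq_sum_iota J hJ _ hv]
  refine Finset.sum_congr rfl fun z _ => ?_
  rw [embedJ_apply_iota, subJ_apply]

lemma embedJ_mul_apply_not (A : Matrix (Fin n) (Fin n) ℂ) (S : Matrix (Fin k) (Fin k) ℂ)
    {a : Fin n} (ha : a ∉ J) (b : Fin n) : (embedJ J hJ S * A) a b = A a b := by
  rw [Matrix.mul_apply]
  calc ∑ c, embedJ J hJ S a c * A c b
      = ∑ c, (if a = c then A c b else 0) := by
        refine Finset.sum_congr rfl fun c _ => ?_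
        rw [embedJ_apply_not J hJ ha c S]; split <;> simp
    _ = A a b := by simp

lemma mul_embedJ_apply_not (A : Matrix (Fin n) (Fin n) ℂ) (S : Matrix (Fin k) (Fin k) ℂ)
    (a : Fin n) {b : Fin n} (hb : b ∉ J) : (A * embedJ J hJ S) a b = A a b := by
  rw [Matrix.mul_apply]
  calc ∑ c, A a c * embedJ J hJ S c b
      = ∑ c, (if c = b then A a c else 0) := by
        refine Finset.sum_congr rfl fun c _ => ?_
        by_cases hc : c ∈ J
        · rw [embedJ_apply_mem_not J hJ hc hb, mul_zero, if_neg (fun h : c = b => hb (h ▸ hc))]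
        · rw [embedJ_apply_not J hJ hc b S]; split <;> simp
    _ = A a b := by simp

lemma conj_embedJ_apply_not (A : Matrix (Fin n) (Fin n) ℂ)
    (S T : Matrix (Fin k) (Fin k) ℂ) {i : Fin n} (hi : i ∉ J) :
    (embedJ J hJ S * A * embedJ J hJ T) i i = A i i := by
  rw [mul_embedJ_apply_not J hJ _ _ _ hi, embedJ_mul_apply_not J hJ _ _ hi]
end SubLemmas

section PDLemmas
variable {n : ℕ}

lemma posDef_diag_re_pos {B : Matrix (Fin n) (Fin n) ℂ} (hB : B.PosDef) (i : Fin n) :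
    0 < (B i i).re := by
  have := hB.re_dotProduct_pos (x := Pi.single i 1)
    (by simp [Function.ne_iff])
  simpa [dotProduct, mulVec, Pi.single_apply, Finset.sum_ite_eq'] using this

lemma posDef_diag_eq_re {B : Matrix (Fin n) (Fin n) ℂ} (hB : B.IsHermitian) (i : Fin n) :
    B i i = ((B i i).re : ℂ) :=
  (Complex.conj_eq_iff_re.mp (hB.apply i i)).symm

lemma posDef_conj {B E : Matrix (Fin n) (Fin n) ℂ} (hB : B.PosDef) (hE : IsUnit E.det) :
    (Eᴴ * B * E).PosDef := by
  rw [Matrix.posDef_iff_dotProduct_mulVec]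
  constructor
  · exact Matrix.isHermitian_conjTranspose_mul_mul E hB.1
  · intro x hx
    have hEx : E *ᵥ x ≠ 0 := by
      intro h
      apply hx
      have hinj := Matrix.mulVec_injective_iff_isUnit.2 ((Matrix.isUnit_iff_isUnit_det _).2 hE)
      have : E *ᵥ x = E *ᵥ 0 := by simpa [Matrix.mulVec_zero] using h
      exact hinj this
    simpa only [Matrix.star_mulVec, Matrix.dotProduct_mulVec, Matrix.vecMul_vecMul]
      using (Matrix.posDef_iff_dotProduct_mulVec.mp hB).2 hEx

lemma hatM_inv {B : Matrix (Fin n) (Fin n) ℂ} (hB : B.PosDef) :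
    (hatM B)⁻¹ = sqrtDiag B * B⁻¹ * sqrtDiag B := by
  have hBdet : IsUnit B.det := (Matrix.isUnit_iff_isUnit_det _).1 hB.isUnit
  have hsd : ∀ i, (Real.sqrt (B i i).re : ℂ) ≠ 0 := fun i => by
    have := posDef_diag_re_pos hB i
    simp [Real.sqrt_eq_zero', not_le, this]
  have hD : sqrtDiag B * (sqrtDiag B)⁻¹ = 1 := by
    apply Matrix.mul_nonsing_inv
    rw [sqrtDiag, Matrix.det_diagonal]
    exact (Finset.prod_ne_zero_iff.2 fun i _ => hsd i).isUnit
  have hD' : (sqrtDiag B)⁻¹ * sqrtDiag B = 1 := by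
    apply Matrix.nonsing_inv_mul
    rw [sqrtDiag, Matrix.det_diagonal]
    exact (Finset.prod_ne_zero_iff.2 fun i _ => hsd i).isUnit
  apply Matrix.inv_eq_right_inv
  calc (sqrtDiag B)⁻¹ * B * (sqrtDiag B)⁻¹ * (sqrtDiag B * B⁻¹ * sqrtDiag B)
      = (sqrtDiag B)⁻¹ * B * ((sqrtDiag B)⁻¹ * sqrtDiag B) * B⁻¹ * sqrtDiag B := by
        simp only [Matrix.mul_assoc]
    _ = (sqrtDiag B)⁻¹ * (B * B⁻¹) * sqrtDiag B := by rw [hD']; simp only [Matrix.mul_one, Matrix.mul_assoc]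
    _ = (sqrtDiag B)⁻¹ * sqrtDiag B := by rw [Matrix.mul_nonsing_inv _ hBdet]; simp [Matrix.mul_assoc]
    _ = 1 := hD'

lemma Gamma_eq_sum {B : Matrix (Fin n) (Fin n) ℂ} (hB : B.PosDef) :
    Gamma B = (∑ i, (B i i * B⁻¹ i i).re) - n := by
  rw [Gamma, hatM_inv hB, Matrix.trace]
  congr 1
  rw [← Complex.re_sum]
  congr 1
  apply Finset.sum_congr rfl
  intro i _
  rw [Matrix.diag_apply, sqrtDiag]
  simp only [Matrix.mul_diagonal, Matrix.diagonal_mul]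
  rw [posDef_diag_eq_re hB.1 i]
  have h2 : (Real.sqrt (B i i).re : ℂ) * (Real.sqrt (B i i).re : ℂ) = ((B i i).re : ℂ) := by
    rw [← Complex.ofReal_mul, Real.mul_self_sqrt (posDef_diag_re_pos hB i).le]
  calc (Real.sqrt (B i i).re : ℂ) * B⁻¹ i i * (Real.sqrt (B i i).re : ℂ)
      = (Real.sqrt (B i i).re : ℂ) * (Real.sqrt (B i i).re : ℂ) * B⁻¹ i i := by ring
    _ = ((B i i).re : ℂ) * B⁻¹ i i := by rw [h2]

end PDLemmas

section CS
variable {n : ℕ}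

lemma star_single_one (i : Fin n) : star ((Pi.single i 1 : Fin n → ℂ)) = Pi.single i 1 := by
  funext j
  rcases eq_or_ne j i with rfl | hj
  · simp
  · simp [Pi.single_apply, hj]

lemma one_le_diag_mul_inv_diag {B : Matrix (Fin n) (Fin n) ℂ} (hB : B.PosDef) (i : Fin n) :
    1 ≤ (B i i * B⁻¹ i i).re := by
  have hBdet : IsUnit B.det := (Matrix.isUnit_iff_isUnit_det _).1 hB.isUnit
  have hc : 0 < (B⁻¹ i i).re := posDef_diag_re_pos hB.inv i
  set c : ℝ := (B⁻¹ i i).re with hcdef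
  set e : Fin n → ℂ := Pi.single i 1 with he
  set y : Fin n → ℂ := B⁻¹ *ᵥ e with hy
  set v : Fin n → ℂ := e - ((c⁻¹ : ℝ) : ℂ) • y with hv
  have hBy : B *ᵥ y = e := by
    rw [hy, Matrix.mulVec_mulVec, Matrix.mul_nonsing_inv _ hBdet, Matrix.one_mulVec]
  have h0 : 0 ≤ (star v ⬝ᵥ B *ᵥ v).re := hB.posSemidef.re_dotProduct_nonneg v
  have hA1 : star e ⬝ᵥ B *ᵥ e = B i i := by
    rw [he, star_single_one, single_one_dotProduct, Matrix.mulVec_single_one]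
    rfl
  have hA3 : star e ⬝ᵥ e = 1 := by
    rw [he, star_single_one, single_one_dotProduct]
    simp
  have hA2 : star y ⬝ᵥ B *ᵥ e = 1 := by
    rw [Matrix.dotProduct_mulVec]
    have h := Matrix.star_mulVec (M := Bᴴ) (v := y)
    rw [Matrix.conjTranspose_conjTranspose, hB.1.eq, hBy] at h
    rw [← h, ← hA3, he, star_single_one]
  have hA4 : star y ⬝ᵥ e = (c : ℂ) := by
    rw [he, dotProduct_single]
    have hyi : y i = B⁻¹ i i := by
      rw [hy, he, Matrix.mulVec_single_one]
      rfl
    rw [mul_one, Pi.star_apply, hyi, posDef_diag_eq_re hB.inv.1 i]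
    simpa using hcdef.symm
  have hexp : star v ⬝ᵥ B *ᵥ v
      = B i i - ((c⁻¹:ℝ):ℂ) - ((c⁻¹:ℝ):ℂ) + ((c⁻¹:ℝ):ℂ) * ((c⁻¹:ℝ):ℂ) * (c:ℂ) := by
    rw [hv, Matrix.mulVec_sub, Matrix.mulVec_smul, hBy]
    rw [star_sub, star_smul]
    rw [sub_dotProduct, dotProduct_sub, dotProduct_sub]
    rw [smul_dotProduct, smul_dotProduct, dotProduct_smul, dotProduct_smul]
    rw [hA1, hA2, hA3, hA4]
    have hstar : star ((c⁻¹:ℝ):ℂ) = ((c⁻¹:ℝ):ℂ) := by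
      simp [Complex.star_def, Complex.conj_ofReal]
    rw [hstar]
    simp only [smul_eq_mul]
    ring
  rw [hexp] at h0
  have hre : (B i i - ((c⁻¹:ℝ):ℂ) - ((c⁻¹:ℝ):ℂ) + ((c⁻¹:ℝ):ℂ) * ((c⁻¹:ℝ):ℂ) * (c:ℂ)).re
      = (B i i).re - c⁻¹ := by
    have h5 : ((c⁻¹:ℝ):ℂ) * ((c⁻¹:ℝ):ℂ) * (c:ℂ) = ((c⁻¹ * c⁻¹ * c : ℝ) : ℂ) := by push_cast; ring
    have h6 : c⁻¹ * c⁻¹ * c = c⁻¹ := by field_simp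
    rw [h5, h6]
    simp [Complex.sub_re, Complex.add_re, Complex.ofReal_re]
  rw [hre] at h0
  have hb : c⁻¹ ≤ (B i i).re := by linarith
  have h7 : 1 ≤ (B i i).re * c := by
    rw [← inv_mul_cancel₀ (ne_of_gt hc)]
    exact mul_le_mul_of_nonneg_right hb hc.le
  calc (1:ℝ) ≤ (B i i).re * c := h7
    _ = (B i i * B⁻¹ i i).re := by
        rw [posDef_diag_eq_re hB.1 i, posDef_diag_eq_re hB.inv.1 i, ← hcdef]
        rw [← Complex.ofReal_mul]
        simp

lemma Gamma_nonneg {B : Matrix (Fin n) (Fin n) ℂ} (hB : B.PosDef) : 0 ≤ Gamma B := by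
  rw [Gamma_eq_sum hB, sub_nonneg]
  calc (n : ℝ) = ∑ _i : Fin n, (1:ℝ) := by simp
    _ ≤ ∑ i, (B i i * B⁻¹ i i).re :=
        Finset.sum_le_sum fun i _ => one_le_diag_mul_inv_diag hB i

end CS

section Pivot
variable {n k : ℕ}

lemma sum_J_eq {M : Type*} [AddCommMonoid M] (J : Finset (Fin n)) (hJ : J.card = k)
    (f : Fin n → M) :
    ∑ i ∈ J, f i = ∑ x : Fin k, f ((J.orderIsoOfFin hJ) x : Fin n) := by
  rw [← Finset.sum_coe_sort J f]
  exact (Equiv.sum_comp (J.orderIsoOfFin hJ).toEquiv (fun c : J => f c)).symm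

lemma sum_diag_eq {M : Type*} [AddCommMonoid M] (J : Finset (Fin n)) (f : Fin n × Fin n → M) :
    ∑ p ∈ J.diag, f p = ∑ i ∈ J, f (i, i) := by
  refine Finset.sum_nbij' (fun p => p.1) (fun i => (i, i)) ?_ ?_ ?_ ?_ ?_
  · intro p hp; exact (Finset.mem_diag.mp hp).1
  · intro i hi; exact Finset.mem_diag.mpr ⟨hi, rfl⟩
  · intro p hp
    obtain ⟨h1, h2⟩ := Finset.mem_diag.mp hp
    obtain ⟨a, b⟩ := p
    cases h2
    rfl
  · intro i _; rfl
  · intro p hp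
    obtain ⟨h1, h2⟩ := Finset.mem_diag.mp hp
    obtain ⟨a, b⟩ := p
    cases h2
    rfl

lemma trace_diag_mul {D M : Matrix (Fin k) (Fin k) ℂ} (hD : D.IsDiag) :
    Matrix.trace (D * M) = ∑ x, D x x * M x x := by
  rw [Matrix.trace]
  refine Finset.sum_congr rfl fun x _ => ?_
  rw [Matrix.diag_apply, Matrix.mul_apply]
  refine Finset.sum_eq_single x (fun c _ hc => ?_) (fun h => absurd (Finset.mem_univ x) h)
  rw [hD (Ne.symm hc), zero_mul]

lemma Gamma_pivot {B : Matrix (Fin n) (Fin n) ℂ} (hB : B.PosDef)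
    (J : Finset (Fin n)) (hJ : J.card = k) {S : Matrix (Fin k) (Fin k) ℂ}
    (hS : IsUnit S.det) (hdiag : (Sᴴ * subJ J hJ B * S).IsDiag) :
    (((embedJ J hJ S⁻¹)⁻¹)ᴴ * B * (embedJ J hJ S⁻¹)⁻¹).PosDef ∧
    Gamma (((embedJ J hJ S⁻¹)⁻¹)ᴴ * B * (embedJ J hJ S⁻¹)⁻¹)
      = ((∑ i, (B i i * B⁻¹ i i).re)
          + ∑ p ∈ J.offDiag, (B p.1 p.2 * B⁻¹ p.2 p.1).re) - n := by
  have hBdet : IsUnit B.det := (Matrix.isUnit_iff_isUnit_det _).1 hB.isUnit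
  have hSH : IsUnit Sᴴ.det := by
    rw [Matrix.det_conjTranspose]; exact hS.star
  have hES : embedJ J hJ S⁻¹ * embedJ J hJ S = 1 := by
    rw [embedJ_mul, Matrix.nonsing_inv_mul _ hS, embedJ_one]
  have hSE : embedJ J hJ S * embedJ J hJ S⁻¹ = 1 := by
    rw [embedJ_mul, Matrix.mul_nonsing_inv _ hS, embedJ_one]
  have hinv : (embedJ J hJ S⁻¹)⁻¹ = embedJ J hJ S := Matrix.inv_eq_right_inv hES
  rw [hinv]
  have hEdet : IsUnit (embedJ J hJ S).det := Matrix.isUnit_det_of_right_inverse hSE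
  have hPD : ((embedJ J hJ S)ᴴ * B * embedJ J hJ S).PosDef := posDef_conj hB hEdet
  refine ⟨hPD, ?_⟩
  set B' := (embedJ J hJ S)ᴴ * B * embedJ J hJ S with hB'def
  have hB'eq : B' = embedJ J hJ Sᴴ * B * embedJ J hJ S := by
    rw [hB'def, embedJ_conjTranspose]
  have hB'inv : B'⁻¹ = embedJ J hJ S⁻¹ * B⁻¹ * embedJ J hJ (Sᴴ)⁻¹ := by
    apply Matrix.inv_eq_right_inv
    rw [hB'eq]
    calc embedJ J hJ Sᴴ * B * embedJ J hJ S * (embedJ J hJ S⁻¹ * B⁻¹ * embedJ J hJ (Sᴴ)⁻¹)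
        = embedJ J hJ Sᴴ * (B * ((embedJ J hJ S * embedJ J hJ S⁻¹) * (B⁻¹ * embedJ J hJ (Sᴴ)⁻¹))) := by
          simp only [Matrix.mul_assoc]
      _ = embedJ J hJ Sᴴ * ((B * B⁻¹) * embedJ J hJ (Sᴴ)⁻¹) := by
          rw [hSE]; simp only [Matrix.one_mul, Matrix.mul_assoc]
      _ = embedJ J hJ Sᴴ * embedJ J hJ (Sᴴ)⁻¹ := by
          rw [Matrix.mul_nonsing_inv _ hBdet, Matrix.one_mul]
      _ = 1 := by rw [embedJ_mul, Matrix.mul_nonsing_inv _ hSH, embedJ_one]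
  rw [Gamma_eq_sum hPD]
  congr 1
  -- ∑ i, (B' i i * B'⁻¹ i i).re = ∑ i, (B i i * B⁻¹ i i).re + ∑ offDiag
  rw [← Finset.sum_add_sum_compl J (fun i => (B' i i * B'⁻¹ i i).re),
      ← Finset.sum_add_sum_compl J (fun i => (B i i * B⁻¹ i i).re)]
  have hcompl : ∑ i ∈ Jᶜ, (B' i i * B'⁻¹ i i).re = ∑ i ∈ Jᶜ, (B i i * B⁻¹ i i).re := by
    refine Finset.sum_congr rfl fun i hi => ?_
    have hiJ : i ∉ J := by simpa using hi
    rw [hB'inv, hB'eq, conj_embedJ_apply_not J hJ _ _ _ hiJ, conj_embedJ_apply_not J hJ _ _ _ hiJ]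
  rw [hcompl]
  -- ∑ i ∈ J, (B' i i * B'⁻¹ i i).re = ∑ i ∈ J, (B i i * B⁻¹ i i).re + ∑ offDiag
  have hsubB' : subJ J hJ B' = Sᴴ * subJ J hJ B * S := by
    rw [hB'eq, subJ_mul_embedJ, embedJ_mul_subJ]
  have hsubB'inv : subJ J hJ B'⁻¹ = S⁻¹ * subJ J hJ B⁻¹ * (Sᴴ)⁻¹ := by
    rw [hB'inv, subJ_mul_embedJ, embedJ_mul_subJ]
  have hJsum : ∑ i ∈ J, (B' i i * B'⁻¹ i i).re
      = (Matrix.trace (subJ J hJ B' * subJ J hJ B'⁻¹)).re := by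
    have hdiag' : (subJ J hJ B').IsDiag := by rw [hsubB']; exact hdiag
    rw [sum_J_eq J hJ, trace_diag_mul hdiag', Complex.re_sum]
    refine Finset.sum_congr rfl fun x _ => ?_
    rw [subJ_apply, subJ_apply]
  have htr : Matrix.trace (subJ J hJ B' * subJ J hJ B'⁻¹)
      = Matrix.trace (subJ J hJ B * subJ J hJ B⁻¹) := by
    rw [hsubB', hsubB'inv]
    calc Matrix.trace (Sᴴ * subJ J hJ B * S * (S⁻¹ * subJ J hJ B⁻¹ * (Sᴴ)⁻¹))
        = Matrix.trace (Sᴴ * (subJ J hJ B * ((S * S⁻¹) * (subJ J hJ B⁻¹ * (Sᴴ)⁻¹)))) := by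
          simp only [Matrix.mul_assoc]
      _ = Matrix.trace (Sᴴ * (subJ J hJ B * subJ J hJ B⁻¹ * (Sᴴ)⁻¹)) := by
          rw [Matrix.mul_nonsing_inv _ hS]; simp only [Matrix.one_mul, Matrix.mul_assoc]
      _ = Matrix.trace (subJ J hJ B * subJ J hJ B⁻¹ * (Sᴴ)⁻¹ * Sᴴ) := by
          rw [Matrix.trace_mul_comm]
      _ = Matrix.trace (subJ J hJ B * subJ J hJ B⁻¹) := by
          rw [Matrix.mul_assoc, Matrix.nonsing_inv_mul _ hSH, Matrix.mul_one]
  have htr2 : (Matrix.trace (subJ J hJ B * subJ J hJ B⁻¹)).re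
      = ∑ i ∈ J, (B i i * B⁻¹ i i).re + ∑ p ∈ J.offDiag, (B p.1 p.2 * B⁻¹ p.2 p.1).re := by
    rw [Matrix.trace]
    have : ∑ x, (subJ J hJ B * subJ J hJ B⁻¹).diag x
        = ∑ p ∈ J ×ˢ J, B p.1 p.2 * B⁻¹ p.2 p.1 := by
      rw [Finset.sum_product]
      rw [sum_J_eq J hJ (fun i => ∑ j ∈ J, B i j * B⁻¹ j i)]
      refine Finset.sum_congr rfl fun x _ => ?_
      rw [Matrix.diag_apply, Matrix.mul_apply, sum_J_eq J hJ]
      refine Finset.sum_congr rfl fun y _ => ?_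
      rw [subJ_apply, subJ_apply]
    rw [this, ← Finset.diag_union_offDiag J,
        Finset.sum_union (Finset.disjoint_diag_offDiag J), Complex.add_re,
        sum_diag_eq J, Complex.re_sum, Complex.re_sum]
  rw [hJsum, htr, htr2]
  ring
end Pivot

section Counting
variable {n k : ℕ}

lemma choose_identity (hk : 2 ≤ k) (hkn : k ≤ n) :
    (n-2).choose (k-2) * (n * (n-1)) = n.choose k * (k * (k-1)) := by
  obtain ⟨l, rfl⟩ : ∃ l, k = l + 2 := ⟨k - 2, by omega⟩
  obtain ⟨m, rfl⟩ : ∃ m, n = m + 2 := ⟨n - 2, by omega⟩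
  have hlm : l ≤ m := by omega
  simp only [Nat.add_sub_cancel]
  have h1 : (m+1) * m.choose l = (m+1).choose (l+1) * (l+1) := Nat.add_one_mul_choose_eq m l
  have h2 : (m+2) * (m+1).choose (l+1) = (m+2).choose (l+2) * (l+2) :=
    Nat.add_one_mul_choose_eq (m+1) (l+1)
  calc m.choose l * ((m+2) * (m+2-1))
      = (m+2) * ((m+1) * m.choose l) := by rw [show m+2-1 = m+1 from rfl]; ring
    _ = (m+2) * ((m+1).choose (l+1) * (l+1)) := by rw [h1]
    _ = ((m+2) * (m+1).choose (l+1)) * (l+1) := by ring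
    _ = ((m+2).choose (l+2) * (l+2)) * (l+1) := by rw [h2]
    _ = (m+2).choose (l+2) * ((l+2) * (l+2-1)) := by rw [show l+2-1 = l+1 from rfl]; ring

lemma card_filter_pair (hk : 2 ≤ k) {i j : Fin n} (hij : i ≠ j) :
    ((Finset.powersetCard k (Finset.univ : Finset (Fin n))).filter
      (fun J => i ∈ J ∧ j ∈ J)).card = (n-2).choose (k-2) := by
  have hcard : ((Finset.univ : Finset (Fin n)) \ {i,j}).card = n - 2 := by
    rw [Finset.card_sdiff_of_subset (Finset.subset_univ _), Finset.card_univ, Fintype.card_fin]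
    congr 1
    rw [Finset.card_insert_of_notMem (by simp [hij]), Finset.card_singleton]
  rw [← hcard, ← Finset.card_powersetCard (k-2)]
  apply Finset.card_bij' (fun J _ => J \ ({i,j} : Finset (Fin n)))
    (fun K _ => insert i (insert j K))
  · intro J hJ
    rw [Finset.mem_filter, Finset.mem_powersetCard_univ] at hJ
    obtain ⟨hJk, hiJ, hjJ⟩ := hJ
    rw [Finset.mem_powersetCard]
    constructor
    · exact Finset.sdiff_subset_sdiff (Finset.subset_univ _) le_rfl
    · rw [Finset.card_sdiff_of_subset (by intro x hx; simp at hx; rcases hx with rfl | rfl <;> assumption)]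
      rw [hJk, Finset.card_insert_of_notMem (by simp [hij]), Finset.card_singleton]
  · intro K hK
    rw [Finset.mem_powersetCard] at hK
    obtain ⟨hKsub, hKcard⟩ := hK
    have hiK : i ∉ K := fun h => by simpa using (hKsub h)
    have hjK : j ∉ K := fun h => by simpa using (hKsub h)
    rw [Finset.mem_filter, Finset.mem_powersetCard_univ]
    refine ⟨?_, by simp, by simp⟩
    rw [Finset.card_insert_of_notMem (by simp [hij, hiK]),
        Finset.card_insert_of_notMem hjK, hKcard]
    omega
  · intro J hJ
    rw [Finset.mem_filter] at hJ
    obtain ⟨_, hiJ, hjJ⟩ := hJ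
    ext a
    simp only [Finset.mem_insert, Finset.mem_sdiff, Finset.mem_singleton]
    constructor
    · rintro (rfl | rfl | ⟨ha, _⟩) <;> first | exact hiJ | exact hjJ | exact ha
    · intro ha
      by_cases hai : a = i
      · exact Or.inl hai
      · by_cases haj : a = j
        · exact Or.inr (Or.inl haj)
        · exact Or.inr (Or.inr ⟨ha, by simp [hai, haj]⟩)
  · intro K hK
    rw [Finset.mem_powersetCard] at hK
    obtain ⟨hKsub, _⟩ := hK
    have hiK : i ∉ K := fun h => by simpa using (hKsub h)
    have hjK : j ∉ K := fun h => by simpa using (hKsub h)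
    ext a
    simp only [Finset.mem_sdiff, Finset.mem_insert, Finset.mem_singleton]
    constructor
    · rintro ⟨rfl | rfl | ha, hne⟩
      · exact absurd (Or.inl rfl) hne
      · exact absurd (Or.inr rfl) hne
      · exact ha
    · intro ha
      exact ⟨Or.inr (Or.inr ha), by rintro (rfl | rfl) <;> [exact hiK ha; exact hjK ha]⟩

lemma sum_offDiag_pivots (hk : 2 ≤ k) (f : Fin n × Fin n → ℝ) :
    ∑ J ∈ Finset.powersetCard k (Finset.univ : Finset (Fin n)), ∑ p ∈ J.offDiag, f p
      = ((n-2).choose (k-2) : ℝ) * ∑ p ∈ (Finset.univ : Finset (Fin n)).offDiag, f p := by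
  have hsub : ∀ J ∈ Finset.powersetCard k (Finset.univ : Finset (Fin n)),
      ∑ p ∈ J.offDiag, f p
        = ∑ p ∈ (Finset.univ : Finset (Fin n)).offDiag,
            (if p.1 ∈ J ∧ p.2 ∈ J then f p else 0) := by
    intro J _
    rw [← Finset.sum_filter]
    congr 1
    ext p
    simp only [Finset.mem_filter, Finset.mem_offDiag, Finset.mem_univ, true_and]
    tauto
  rw [Finset.sum_congr rfl hsub, Finset.sum_comm]
  rw [Finset.mul_sum]
  refine Finset.sum_congr rfl fun p hp => ?_
  have hne : p.1 ≠ p.2 := (Finset.mem_offDiag.mp hp).2.2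
  rw [← Finset.sum_filter, Finset.sum_const, card_filter_pair hk hne]
  simp [mul_comm]

end Counting

section Avg
variable {n k : ℕ}

lemma sum_Gamma_pivot (hk : 2 ≤ k) (hkn : k ≤ n) {B : Matrix (Fin n) (Fin n) ℂ}
    (hB : B.PosDef) :
    ∑ J ∈ Finset.powersetCard k (Finset.univ : Finset (Fin n)),
      (((∑ i, (B i i * B⁻¹ i i).re) + ∑ p ∈ J.offDiag, (B p.1 p.2 * B⁻¹ p.2 p.1).re) - n)
    = (1 - ((k:ℝ) * ((k:ℝ) - 1)) / ((n:ℝ) * ((n:ℝ) - 1))) * (n.choose k : ℝ) * Gamma B := by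
  have hBdet : IsUnit B.det := (Matrix.isUnit_iff_isUnit_det _).1 hB.isUnit
  set T : ℝ := ∑ i, (B i i * B⁻¹ i i).re with hT
  set f : Fin n × Fin n → ℝ := fun p => (B p.1 p.2 * B⁻¹ p.2 p.1).re with hf
  have htotal : ∑ p ∈ (Finset.univ : Finset (Fin n)) ×ˢ (Finset.univ : Finset (Fin n)), f p
      = (n : ℝ) := by
    rw [Finset.sum_product]
    have : ∀ i : Fin n, ∑ j, f (i, j) = ((B * B⁻¹) i i).re := by
      intro i
      rw [Matrix.mul_apply, Complex.re_sum]
    rw [Finset.sum_congr rfl fun i _ => this i]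
    rw [Matrix.mul_nonsing_inv _ hBdet]
    simp [Matrix.one_apply]
  have hoff : ∑ p ∈ (Finset.univ : Finset (Fin n)).offDiag, f p = (n : ℝ) - T := by
    have := htotal
    rw [← Finset.diag_union_offDiag (Finset.univ : Finset (Fin n)),
        Finset.sum_union (Finset.disjoint_diag_offDiag _), sum_diag_eq] at this
    have hdiagsum : ∑ i, f (i, i) = T := by rw [hT]
    rw [hdiagsum] at this
    linarith
  have hsplit : ∀ J : Finset (Fin n), ((T + ∑ p ∈ J.offDiag, f p) - (n:ℝ))
      = (T - n) + ∑ p ∈ J.offDiag, f p := fun J => by ring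
  rw [Finset.sum_congr rfl (fun J _ => hsplit J), Finset.sum_add_distrib, Finset.sum_const,
      Finset.card_powersetCard, Finset.card_univ, Fintype.card_fin,
      sum_offDiag_pivots hk f, hoff, nsmul_eq_mul]
  have h2n : (2:ℝ) ≤ (n:ℝ) := by exact_mod_cast le_trans hk hkn
  have h2k : (2:ℝ) ≤ (k:ℝ) := by exact_mod_cast hk
  have hnn : (n:ℝ) * ((n:ℝ) - 1) ≠ 0 := by
    apply mul_ne_zero <;> intro h <;> nlinarith
  have hchoose : ((n-2).choose (k-2) : ℝ) * ((n:ℝ) * ((n:ℝ) - 1))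
      = (n.choose k : ℝ) * ((k:ℝ) * ((k:ℝ) - 1)) := by
    have h := congrArg (Nat.cast : ℕ → ℝ) (choose_identity hk hkn)
    push_cast [Nat.cast_sub (show 1 ≤ n by omega), Nat.cast_sub (show 1 ≤ k by omega)] at h
    linarith
  have hq : (1 - ((k:ℝ) * ((k:ℝ) - 1)) / ((n:ℝ) * ((n:ℝ) - 1))) * (n.choose k : ℝ)
      = (n.choose k : ℝ) - ((n-2).choose (k-2) : ℝ) := by
    rw [sub_mul, one_mul, div_mul_eq_mul_div, mul_comm _ (n.choose k : ℝ), ← hchoose,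
      mul_div_assoc, div_self hnn, mul_one]
  rw [Gamma_eq_sum hB, ← hT, hq]
  ring
end Avg
/-- martingale behavior: in the finite-arithmetic two-sided process with
randomized size-`k` pivoting (adapted intermediate states `B̃^{(t+1/3)}, B̃^{(t+2/3)}`,
where `B̃^{(t+2/3)}` is an exact pivot step of `B̃^{(t+1/3)}` with the pivot `ω t`), for
every `t₁` the process `{C^{t₁−1−t} Y_{t₁,t}}_{t ≥ t₁}` with
`Y_{t₁,t} = Π_{s=t₁}^{t} Γ(B̃^{(s+2/3)})/Γ(B̃^{(s+1/3)})` and `C = 1 − k(k−1)/(n(n−1))`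
is a nonnegative martingale with respect to the filtration generated by the pivots:
it is nonnegative, and its conditional expectation given the pivots through time `t`
(i.e. the average over a fresh uniform pivot in position `t+1`) equals its value at `t`. -/
theorem martingale_behavior {n k : ℕ} (hk : 2 ≤ k) (hkn : k ≤ n)
    (B13 B23 : ℕ → (ℕ → PivotSet n k) → Matrix (Fin n) (Fin n) ℂ)
    (hadapt13 : ∀ (t : ℕ) (ω ω' : ℕ → PivotSet n k),
      (∀ s, s < t → ω s = ω' s) → B13 t ω = B13 t ω')
    (hadapt23 : ∀ (t : ℕ) (ω ω' : ℕ → PivotSet n k),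
      (∀ s, s ≤ t → ω s = ω' s) → B23 t ω = B23 t ω')
    (hPD : ∀ t ω, (B13 t ω).PosDef)
    (hpos : ∀ t ω, 0 < Gamma (B13 t ω))
    (hstep : ∀ (t : ℕ) (ω : ℕ → PivotSet n k), ∃ S : Matrix (Fin k) (Fin k) ℂ,
      IsUnit S.det ∧ (Sᴴ * subJ (ω t).1 (ω t).2 (B13 t ω) * S).IsDiag ∧
      B23 t ω = ((embedJ (ω t).1 (ω t).2 S⁻¹)⁻¹)ᴴ * B13 t ω * (embedJ (ω t).1 (ω t).2 S⁻¹)⁻¹)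
    (t₁ : ℕ) :
    (∀ (t : ℕ) (ω : ℕ → PivotSet n k), t₁ ≤ t →
      0 ≤ (1 - ((k : ℝ) * ((k : ℝ) - 1)) / ((n : ℝ) * ((n : ℝ) - 1))) ^
            ((t₁ : ℤ) - 1 - (t : ℤ)) *
          ∏ s ∈ Finset.Icc t₁ t, (Gamma (B23 s ω) / Gamma (B13 s ω))) ∧
    (∀ (t : ℕ) (ω : ℕ → PivotSet n k), t₁ ≤ t →
      (∑ j : PivotSet n k,
          (1 - ((k : ℝ) * ((k : ℝ) - 1)) / ((n : ℝ) * ((n : ℝ) - 1))) ^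
              ((t₁ : ℤ) - 1 - ((t + 1 : ℕ) : ℤ)) *
            ∏ s ∈ Finset.Icc t₁ (t + 1),
              (Gamma (B23 s (Function.update ω (t + 1) j)) /
                Gamma (B13 s (Function.update ω (t + 1) j)))) /
          (Fintype.card (PivotSet n k) : ℝ) =
        (1 - ((k : ℝ) * ((k : ℝ) - 1)) / ((n : ℝ) * ((n : ℝ) - 1))) ^
            ((t₁ : ℤ) - 1 - (t : ℤ)) *
          ∏ s ∈ Finset.Icc t₁ t, (Gamma (B23 s ω) / Gamma (B13 s ω))) := by

  have h2n : 2 ≤ n := le_trans hk hkn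
  have hC0 : 0 ≤ 1 - ((k : ℝ) * ((k : ℝ) - 1)) / ((n : ℝ) * ((n : ℝ) - 1)) := by
    have h2k : (2:ℝ) ≤ (k:ℝ) := by exact_mod_cast hk
    have hknr : (k:ℝ) ≤ (n:ℝ) := by exact_mod_cast hkn
    have hpos' : 0 < (n:ℝ) * ((n:ℝ) - 1) := by nlinarith
    have hle : (k:ℝ) * ((k:ℝ) - 1) ≤ (n:ℝ) * ((n:ℝ) - 1) := by nlinarith
    have := div_le_one_of_le₀ hle hpos'.le
    linarith
  have hB23 : ∀ (t : ℕ) (ω : ℕ → PivotSet n k), (B23 t ω).PosDef ∧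
      Gamma (B23 t ω) = ((∑ i, ((B13 t ω) i i * (B13 t ω)⁻¹ i i).re)
        + ∑ p ∈ ((ω t).1).offDiag, ((B13 t ω) p.1 p.2 * (B13 t ω)⁻¹ p.2 p.1).re) - n := by
    intro t ω
    obtain ⟨S, hS, hdiag, heq⟩ := hstep t ω
    rw [heq]
    exact Gamma_pivot (hPD t ω) _ _ hS hdiag
  constructor
  · intro t ω _
    apply mul_nonneg (zpow_nonneg hC0 _)
    apply Finset.prod_nonneg
    intro s _
    exact div_nonneg (Gamma_nonneg (hB23 s ω).1) (hpos s ω).le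
  · intro t ω ht
    set Bt := B13 (t+1) ω with hBt
    have hγ : Gamma Bt ≠ 0 := ne_of_gt (hpos (t+1) ω)
    set P : ℝ := ∏ s ∈ Finset.Icc t₁ t, (Gamma (B23 s ω) / Gamma (B13 s ω)) with hP
    have key : ∀ j : PivotSet n k,
        ∏ s ∈ Finset.Icc t₁ (t+1), (Gamma (B23 s (Function.update ω (t+1) j)) /
            Gamma (B13 s (Function.update ω (t+1) j)))
        = P * ((((∑ i, (Bt i i * Bt⁻¹ i i).re)
            + ∑ p ∈ (j.1).offDiag, (Bt p.1 p.2 * Bt⁻¹ p.2 p.1).re) - n) / Gamma Bt) := by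
      intro j
      rw [Finset.prod_Icc_succ_top (show t₁ ≤ t+1 by omega)]
      have h13 : B13 (t+1) (Function.update ω (t+1) j) = B13 (t+1) ω :=
        (hadapt13 (t+1) _ _ (fun s hs => (Function.update_of_ne (show s ≠ t+1 by omega) _ _).symm)).symm
      have h23 : Gamma (B23 (t+1) (Function.update ω (t+1) j))
          = ((∑ i, (Bt i i * Bt⁻¹ i i).re)
              + ∑ p ∈ (j.1).offDiag, (Bt p.1 p.2 * Bt⁻¹ p.2 p.1).re) - n := by
        have h := (hB23 (t+1) (Function.update ω (t+1) j)).2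
        rw [h13, Function.update_self, ← hBt] at h
        exact h
      have hrest : ∏ s ∈ Finset.Icc t₁ t, (Gamma (B23 s (Function.update ω (t+1) j)) /
            Gamma (B13 s (Function.update ω (t+1) j)))
          = P := by
        rw [hP]
        refine Finset.prod_congr rfl fun s hs => ?_
        have hst : s ≤ t := (Finset.mem_Icc.mp hs).2
        have e13 : B13 s (Function.update ω (t+1) j) = B13 s ω :=
          (hadapt13 s _ _ (fun s' hs' => (Function.update_of_ne (show s' ≠ t+1 by omega) _ _).symm)).symm
        have e23 : B23 s (Function.update ω (t+1) j) = B23 s ω :=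
          (hadapt23 s _ _ (fun s' hs' => (Function.update_of_ne (show s' ≠ t+1 by omega) _ _).symm)).symm
        rw [e13, e23]
      rw [hrest, h13, h23, ← hBt]
    have hsum : ∑ j : PivotSet n k,
        (1 - ((k : ℝ) * ((k : ℝ) - 1)) / ((n : ℝ) * ((n : ℝ) - 1))) ^
            ((t₁ : ℤ) - 1 - ((t + 1 : ℕ) : ℤ)) *
          ∏ s ∈ Finset.Icc t₁ (t + 1),
            (Gamma (B23 s (Function.update ω (t + 1) j)) /
              Gamma (B13 s (Function.update ω (t + 1) j)))
        = (1 - ((k : ℝ) * ((k : ℝ) - 1)) / ((n : ℝ) * ((n : ℝ) - 1))) ^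
            ((t₁ : ℤ) - 1 - ((t + 1 : ℕ) : ℤ)) * P / Gamma Bt *
          ((1 - ((k : ℝ) * ((k : ℝ) - 1)) / ((n : ℝ) * ((n : ℝ) - 1))) * (n.choose k : ℝ)
            * Gamma Bt) := by
      rw [Finset.sum_congr rfl (fun j _ => by rw [key j])]
      have hfac : ∀ j : PivotSet n k,
          (1 - ((k : ℝ) * ((k : ℝ) - 1)) / ((n : ℝ) * ((n : ℝ) - 1))) ^
              ((t₁ : ℤ) - 1 - ((t + 1 : ℕ) : ℤ)) *
            (P * ((((∑ i, (Bt i i * Bt⁻¹ i i).re)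
              + ∑ p ∈ (j.1).offDiag, (Bt p.1 p.2 * Bt⁻¹ p.2 p.1).re) - n) / Gamma Bt))
          = ((1 - ((k : ℝ) * ((k : ℝ) - 1)) / ((n : ℝ) * ((n : ℝ) - 1))) ^
              ((t₁ : ℤ) - 1 - ((t + 1 : ℕ) : ℤ)) * P / Gamma Bt) *
            (((∑ i, (Bt i i * Bt⁻¹ i i).re)
              + ∑ p ∈ (j.1).offDiag, (Bt p.1 p.2 * Bt⁻¹ p.2 p.1).re) - n) := fun j => by
        field_simp
      rw [Finset.sum_congr rfl (fun j _ => hfac j), ← Finset.mul_sum]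
      congr 1
      rw [← Finset.sum_subtype (Finset.powersetCard k Finset.univ)
        (fun J => Finset.mem_powersetCard_univ)
        (fun J => ((∑ i, (Bt i i * Bt⁻¹ i i).re)
              + ∑ p ∈ J.offDiag, (Bt p.1 p.2 * Bt⁻¹ p.2 p.1).re) - n)]
      exact sum_Gamma_pivot hk hkn (hPD (t+1) ω)
    rw [hsum, Fintype.card_finset_len, Fintype.card_fin]
    have hN : ((n.choose k : ℕ) : ℝ) ≠ 0 := by
      exact_mod_cast (Nat.choose_pos hkn).ne'
    by_cases hC : (1 - ((k : ℝ) * ((k : ℝ) - 1)) / ((n : ℝ) * ((n : ℝ) - 1))) = 0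
    · rw [hC]
      rw [_root_.zero_zpow _ (by push_cast; omega), _root_.zero_zpow _ (by push_cast; omega)]
      simp
    · have hzp : (1 - ((k : ℝ) * ((k : ℝ) - 1)) / ((n : ℝ) * ((n : ℝ) - 1))) ^
            ((t₁ : ℤ) - 1 - ((t + 1 : ℕ) : ℤ))
          = (1 - ((k : ℝ) * ((k : ℝ) - 1)) / ((n : ℝ) * ((n : ℝ) - 1))) ^
            ((t₁ : ℤ) - 1 - (t : ℤ)) *
            (1 - ((k : ℝ) * ((k : ℝ) - 1)) / ((n : ℝ) * ((n : ℝ) - 1)))⁻¹ := by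
        rw [← _root_.zpow_neg_one, ← _root_.zpow_add₀ hC]
        congr 1
        push_cast
        ring
      rw [hzp]
      have hA : (n:ℝ) - k*(k-1)/(n-1) ≠ 0 := by
        intro h; apply hC
        have hn0 : (n:ℝ) ≠ 0 := Nat.cast_ne_zero.mpr (by omega)
        rw [show (1:ℝ) - k*(k-1)/(n*(n-1)) = ((n:ℝ) - k*(k-1)/(n-1)) / n by
          rw [sub_div, div_self hn0, div_div, mul_comm ((n:ℝ)-1)], h, zero_div]
      field_simp
end
end
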